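/- Let H be a complex Hilbert space, let E be a dense proper linear subspace of H, and let u be a nonzero vector of H with u ∉ E. Let T be the operator with domain D(T) = E given by Tx = (⟨u, x⟩/‖u‖²)·u. Then the domain of TT* equals the orthogonal complement {u}ᗮ = {x ∈ H : ⟨u, x⟩ = 0}, and in particular D(TT*) is not dense in H. -/

import Mathlib

namespace LinearPMap

section Pcomp

variable {R E F G : Type*} [CommRing R]
  [AddCommGroup E] [Module R E]
  [AddCommGroup F] [Module R F]
  [AddCommGroup G] [Module R G]

/-- Composition of partially defined linear maps (unbounded operators), with the natural
domain `D(A ∘ B) = {x ∈ D(B) : B x ∈ D(A)}`, sending `x` to `A (B x)`. -/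
noncomputable def pcomp (A : F →ₗ.[R] G) (B : E →ₗ.[R] F) : E →ₗ.[R] G where
  domain := (A.domain.comap B.toFun).map B.domain.subtype
  toFun := A.toFun.comp <|
    (LinearMap.codRestrict A.domain
        (B.toFun.comp (A.domain.comap B.toFun).subtype) fun x => x.2).comp
      (Submodule.equivMapOfInjective B.domain.subtype
        (Submodule.injective_subtype _) (A.domain.comap B.toFun)).symm.toLinearMap

theorem mem_pcomp_domain {A : F →ₗ.[R] G} {B : E →ₗ.[R] F} {x : E} :
    x ∈ (A.pcomp B).domain ↔ ∃ hx : x ∈ B.domain, B ⟨x, hx⟩ ∈ A.domain := by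
  constructor
  · rintro ⟨y, hy, rfl⟩
    exact ⟨y.2, by simpa using hy⟩
  · rintro ⟨hx, hx'⟩
    exact ⟨⟨x, hx⟩, hx', rfl⟩

theorem pcomp_apply {A : F →ₗ.[R] G} {B : E →ₗ.[R] F} (x : (A.pcomp B).domain)
    (hx : (x : E) ∈ B.domain) (hx' : B ⟨(x : E), hx⟩ ∈ A.domain) :
    (A.pcomp B) x = A ⟨B ⟨(x : E), hx⟩, hx'⟩ := by
  set e := (Submodule.equivMapOfInjective B.domain.subtype
    (Submodule.injective_subtype _) (A.domain.comap B.toFun)) with he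
  have hy : (((e.symm x : _) : B.domain) : E) = (x : E) := by
    conv_rhs => rw [← e.apply_symm_apply x]
    rfl
  have h2 : ((e.symm x : _) : B.domain) = ⟨(x : E), hx⟩ := Subtype.ext hy
  show A.toFun _ = A.toFun _
  congr 1
  exact Subtype.ext (congrArg B.toFun h2)

end Pcomp

end LinearPMap

open scoped LinearPMap

theorem stmt_11 {H : Type*} [NormedAddCommGroup H] [InnerProductSpace ℂ H] [CompleteSpace H]
    (E : Submodule ℂ H) (hEdense : Dense (E : Set H)) (hEproper : E ≠ ⊤)
    (u : H) (hu : u ≠ 0) (huE : u ∉ E)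
    (T : H →ₗ.[ℂ] H) (hdom : T.domain = E)
    (hTval : ∀ x : T.domain, T x = ((inner ℂ u (x : H) : ℂ) / ((‖u‖ : ℂ) ^ 2)) • u) :
    (((T.pcomp T.adjoint).domain : Set H) = {x : H | (inner ℂ u x : ℂ) = 0}) ∧
      ¬Dense (((T.pcomp T.adjoint).domain : Set H)) := by
  have hT : Dense (T.domain : Set H) := by rw [hdom]; exact hEdense
  have hnorm : ((‖u‖ : ℂ) ^ 2) ≠ 0 := by
    simp [hu, norm_eq_zero]
  have hkey : ∀ y : H, ∀ x : T.domain,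
      (inner ℂ (((inner ℂ u y : ℂ) / ((‖u‖ : ℂ) ^ 2)) • u) (x : H) : ℂ) = inner ℂ y (T x) := by
    intro y x
    rw [hTval x, inner_smul_left, inner_smul_right]
    rw [map_div₀, inner_conj_symm, map_pow, Complex.conj_ofReal]
    ring
  have hmem : ∀ y : H, y ∈ T.adjoint.domain := fun y =>
    LinearPMap.mem_adjoint_domain_of_exists y ⟨_, hkey y⟩
  have hval : ∀ (y : H) (hy : y ∈ T.adjoint.domain),
      T.adjoint ⟨y, hy⟩ = ((inner ℂ u y : ℂ) / ((‖u‖ : ℂ) ^ 2)) • u := fun y hy =>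
    LinearPMap.adjoint_apply_eq hT ⟨y, hy⟩ (hkey y)
  have hset : ((T.pcomp T.adjoint).domain : Set H) = {x : H | (inner ℂ u x : ℂ) = 0} := by
    ext x
    simp only [SetLike.mem_coe, LinearPMap.mem_pcomp_domain, Set.mem_setOf_eq]
    constructor
    · rintro ⟨hx, hx'⟩
      rw [hval x hx, hdom] at hx'
      by_contra h
      have hc : ((inner ℂ u x : ℂ) / ((‖u‖ : ℂ) ^ 2)) ≠ 0 := div_ne_zero h hnorm
      have h2 := E.smul_mem (((inner ℂ u x : ℂ) / ((‖u‖ : ℂ) ^ 2))⁻¹) hx'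
      rw [smul_smul, inv_mul_cancel₀ hc, one_smul] at h2
      exact huE h2
    · intro h
      refine ⟨hmem x, ?_⟩
      rw [hval x (hmem x), h, hdom]
      simp
  refine ⟨hset, ?_⟩
  rw [hset]
  intro hdense
  have hclosed : IsClosed {x : H | (inner ℂ u x : ℂ) = 0} := by
    have : {x : H | (inner ℂ u x : ℂ) = 0} = (innerSL ℂ u) ⁻¹' {0} := rfl
    rw [this]
    exact (isClosed_singleton).preimage (innerSL ℂ u).continuous
  have : {x : H | (inner ℂ u x : ℂ) = 0} = Set.univ := by
    rw [← hclosed.closure_eq]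
    exact hdense.closure_eq
  have hu2 : (inner ℂ u u : ℂ) = 0 := by
    have := this ▸ Set.mem_univ u
    exact this
  exact hu (inner_self_eq_zero.mp hu2)
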